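/- Define linear operators 𝒞, 𝒟 : ℚ[x] → ℚ[x] by 𝒞(x^n) = x^{n+1} - x^{n-1} for n ≥ 2, 𝒞(x^n) = x^{n+1} for n ∈ {0,1}; 𝒟(x^2) = -1, 𝒟(1) = 1, 𝒟(x^n) = 0 otherwise. Then 𝒞(𝒬_n(x)) = 𝒬_{n+1}(x) for all n ≥ 0, and 𝒟(𝒬_n(x)) = 0 for odd n, while 𝒟(𝒬_n(x)) = (-1)^{n/2} C_{n/2} for even n, where C_k is the k-th Catalan number. -/

import Mathlib

open Polynomial

/-- The binomial coefficient `C(a,b)` for integer arguments, with the convention that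
`C(a,b) = 0` unless `0 ≤ b ≤ a`. -/
def Cb (a b : ℤ) : ℚ :=
  if 0 ≤ b ∧ b ≤ a then (a.toNat.choose b.toNat : ℚ) else 0

/-- `𝒬_0(x) = 1` and
`𝒬_n(x) = Σ_{j=0}^{⌊(n-1)/2⌋} (-1)^j (C(n-1,j) - C(n-1,j-1)) x^{n-2j}` for `n ≥ 1`. -/
noncomputable def QQ : ℕ → Polynomial ℚ
  | 0 => 1
  | (n + 1) =>
      ∑ j ∈ Finset.range (n / 2 + 1),
        Polynomial.C ((-1 : ℚ) ^ j * (Cb n j - Cb n ((j : ℤ) - 1))) *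
          Polynomial.X ^ (n + 1 - 2 * j)

noncomputable def Acoef (m j : ℕ) : ℚ := (-1 : ℚ) ^ j * (Cb m j - Cb m ((j : ℤ) - 1))

lemma Cb_natcast (n k : ℕ) : Cb n k = (n.choose k : ℚ) := by
  rw [Cb]
  split_ifs with h
  · simp
  · have hnk : n < k := by omega
    rw [Nat.choose_eq_zero_of_lt hnk]
    norm_num

lemma pascal' (m : ℕ) (b : ℤ) : Cb ((m : ℤ) + 1) b = Cb (m : ℤ) b + Cb (m : ℤ) (b - 1) := by
  have hcast : ((m : ℤ) + 1) = ((m + 1 : ℕ) : ℤ) := by push_cast; ring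
  rcases lt_or_ge b 0 with hb | hb
  · unfold Cb
    rw [if_neg (by omega), if_neg (by omega), if_neg (by omega)]
    ring
  · obtain ⟨k, rfl⟩ := Int.eq_ofNat_of_zero_le hb
    rw [hcast]
    cases k with
    | zero =>
        rw [Cb_natcast (m + 1) 0, Cb_natcast m 0]
        unfold Cb
        rw [if_neg (by omega)]
        norm_num
    | succ j =>
        rw [show ((j + 1 : ℕ) : ℤ) - 1 = (j : ℤ) by push_cast; ring,
          Cb_natcast (m + 1) (j + 1), Cb_natcast m (j + 1), Cb_natcast m j]
        push_cast [Nat.choose_succ_succ]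
        ring

lemma Acoef_zero (m : ℕ) : Acoef m 0 = 1 := by
  simp only [Acoef]
  norm_num [Cb]

lemma Acoef_succ (m j : ℕ) : Acoef (m + 1) (j + 1) = Acoef m (j + 1) - Acoef m j := by
  simp only [Acoef]
  push_cast
  rw [show ((j : ℤ) + 1) - 1 = (j : ℤ) from by ring,
    pascal' m ((j : ℤ) + 1), pascal' m (j : ℤ),
    show ((j : ℤ) + 1) - 1 = (j : ℤ) from by ring, pow_succ]
  ring

lemma Acoef_succ' (m j : ℕ) : Acoef (m + 2) (j + 1) = Acoef (m + 1) (j + 1) - Acoef (m + 1) j :=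
  Acoef_succ (m + 1) j

lemma Acoef_half (t : ℕ) : Acoef (2 * t + 1) (t + 1) = 0 := by
  simp only [Acoef]
  rw [show ((t + 1 : ℕ) : ℤ) - 1 = (t : ℤ) by push_cast; ring,
    Cb_natcast (2 * t + 1) (t + 1), Cb_natcast (2 * t + 1) t, Nat.choose_symm_half]
  ring

lemma QQ_eq (m : ℕ) : QQ (m + 1) =
    ∑ j ∈ Finset.range (m / 2 + 1), Acoef m j • (X : ℚ[X]) ^ (m + 1 - 2 * j) := by
  rw [QQ]
  exact Finset.sum_congr rfl fun j _ => by rw [smul_eq_C_mul]; rfl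

lemma cat_lemma (t : ℕ) :
    Cb (2 * t + 1) t - Cb (2 * t + 1) ((t : ℤ) - 1) = (catalan (t + 1) : ℚ) := by
  cases t with
  | zero =>
      norm_num [Cb, catalan_one]
  | succ s =>
      push_cast
      rw [show ((s : ℤ) + 1) - 1 = (s : ℤ) from by ring,
        show 2 * ((s : ℤ) + 1) + 1 = ((2 * s + 3 : ℕ) : ℤ) from by push_cast; ring,
        show ((s : ℤ) + 1) = ((s + 1 : ℕ) : ℤ) from by push_cast; ring,
        Cb_natcast (2 * s + 3) (s + 1), Cb_natcast (2 * s + 3) s,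
        show s + 1 + 1 = s + 2 from rfl]
      have h1 : (s + 3) * catalan (s + 2) = Nat.centralBinom (s + 2) :=
        succ_mul_catalan_eq_centralBinom (s + 2)
      have h2 : Nat.centralBinom (s + 2) = (2 * s + 4).choose (s + 2) := by
        unfold Nat.centralBinom
        rw [show 2 * (s + 2) = 2 * s + 4 from by ring]
      have h3 : (2 * s + 4).choose (s + 2) = (2 * s + 3).choose (s + 1) + (2 * s + 3).choose (s + 2) := by
        rw [show 2 * s + 4 = (2 * s + 3) + 1 from rfl]
        exact Nat.choose_succ_succ _ _
      have h4 : (2 * s + 3).choose (s + 2) = (2 * s + 3).choose (s + 1) := by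
        rw [show 2 * s + 3 = 2 * (s + 1) + 1 from by ring]
        exact Nat.choose_symm_half (s + 1)
      have h5 : (2 * s + 3).choose (s + 1) * (s + 1) = (2 * s + 3).choose s * (s + 3) := by
        have h := Nat.choose_succ_right_eq (2 * s + 3) s
        rwa [show 2 * s + 3 - s = s + 3 from by omega] at h
      have h6 : (s + 3) * catalan (s + 2) = 2 * (2 * s + 3).choose (s + 1) := by
        rw [h1, h2, h3, h4]; ring
      have H1 : ((s : ℚ) + 3) * (catalan (s + 2) : ℚ) = 2 * ((2 * s + 3).choose (s + 1) : ℚ) := by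
        exact_mod_cast h6
      have H5 : ((2 * s + 3).choose (s + 1) : ℚ) * ((s : ℚ) + 1)
          = ((2 * s + 3).choose s : ℚ) * ((s : ℚ) + 3) := by exact_mod_cast h5
      have hs : ((s : ℚ) + 3) ≠ 0 := by positivity
      have key : (((2 * s + 3).choose (s + 1) : ℚ) - ((2 * s + 3).choose s : ℚ)
          - (catalan (s + 2) : ℚ)) * ((s : ℚ) + 3) = 0 := by linear_combination H5 - H1
      rcases mul_eq_zero.mp key with h | h
      · have : ((2 * s + 3).choose (s + 1) : ℚ) - ((2 * s + 3).choose s : ℚ)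
            = (catalan (s + 2) : ℚ) := by linarith
        exact this
      · exact absurd h hs

lemma Acoef_cat (t : ℕ) : Acoef (2 * t + 1) t = (-1 : ℚ) ^ t * (catalan (t + 1) : ℚ) := by
  simp only [Acoef]
  push_cast
  rw [cat_lemma]

section aux

variable (Cop Dop : Polynomial ℚ →ₗ[ℚ] Polynomial ℚ)

lemma Ceven
    (hC1 : Cop (X ^ 1) = X ^ 2)
    (hC2 : ∀ n : ℕ, 2 ≤ n → Cop ((X : ℚ[X]) ^ n) = X ^ (n + 1) - X ^ (n - 1))
    (t : ℕ) : Cop (QQ (2 * t + 1)) = QQ (2 * t + 2) := by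
  have hq1 : QQ (2 * t + 1)
      = ∑ j ∈ Finset.range (t + 1), Acoef (2 * t) j • (X : ℚ[X]) ^ (2 * t + 1 - 2 * j) := by
    rw [QQ_eq, show (2 * t) / 2 = t from by omega]
  have hq2 : QQ (2 * t + 2)
      = ∑ j ∈ Finset.range (t + 1), Acoef (2 * t + 1) j • (X : ℚ[X]) ^ (2 * t + 2 - 2 * j) := by
    rw [show 2 * t + 2 = (2 * t + 1) + 1 from rfl, QQ_eq, show (2 * t + 1) / 2 = t from by omega]
  have L : Cop (QQ (2 * t + 1)) =
      (∑ j ∈ Finset.range t, (Acoef (2 * t) j • (X : ℚ[X]) ^ (2 * t + 2 - 2 * j)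
        - Acoef (2 * t) j • (X : ℚ[X]) ^ (2 * t - 2 * j))) + Acoef (2 * t) t • (X : ℚ[X]) ^ 2 := by
    rw [hq1, Finset.sum_range_succ, map_add, map_sum, show 2 * t + 1 - 2 * t = 1 from by omega,
      map_smul, hC1]
    congr 1
    apply Finset.sum_congr rfl
    intro j hj
    rw [Finset.mem_range] at hj
    rw [map_smul, hC2 _ (by omega), smul_sub,
      show 2 * t + 1 - 2 * j + 1 = 2 * t + 2 - 2 * j from by omega,
      show 2 * t + 1 - 2 * j - 1 = 2 * t - 2 * j from by omega]
  have S2 : ∑ j ∈ Finset.range (t + 1),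
        (Acoef (2 * t + 1) j - Acoef (2 * t) j) • (X : ℚ[X]) ^ (2 * t + 2 - 2 * j)
      = - ∑ j ∈ Finset.range t, Acoef (2 * t) j • (X : ℚ[X]) ^ (2 * t - 2 * j) := by
    rw [Finset.sum_range_succ']
    have h0 : (Acoef (2 * t + 1) 0 - Acoef (2 * t) 0) • (X : ℚ[X]) ^ (2 * t + 2 - 2 * 0) = 0 := by
      rw [Acoef_zero, Acoef_zero, sub_self, zero_smul]
    rw [h0, add_zero]
    have e2 : ∀ j ∈ Finset.range t,
        (Acoef (2 * t + 1) (j + 1) - Acoef (2 * t) (j + 1)) • (X : ℚ[X]) ^ (2 * t + 2 - 2 * (j + 1))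
          = -(Acoef (2 * t) j • (X : ℚ[X]) ^ (2 * t - 2 * j)) := by
      intro j hj
      rw [Acoef_succ, sub_sub_cancel_left, neg_smul,
        show 2 * t + 2 - 2 * (j + 1) = 2 * t - 2 * j from by omega]
    rw [Finset.sum_congr rfl e2, Finset.sum_neg_distrib]
  have R : QQ (2 * t + 2) =
      ((∑ j ∈ Finset.range t, Acoef (2 * t) j • (X : ℚ[X]) ^ (2 * t + 2 - 2 * j))
        + Acoef (2 * t) t • (X : ℚ[X]) ^ 2)
      - ∑ j ∈ Finset.range t, Acoef (2 * t) j • (X : ℚ[X]) ^ (2 * t - 2 * j) := by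
    rw [hq2]
    have e : ∀ j ∈ Finset.range (t + 1),
        Acoef (2 * t + 1) j • (X : ℚ[X]) ^ (2 * t + 2 - 2 * j)
          = Acoef (2 * t) j • (X : ℚ[X]) ^ (2 * t + 2 - 2 * j)
            + (Acoef (2 * t + 1) j - Acoef (2 * t) j) • (X : ℚ[X]) ^ (2 * t + 2 - 2 * j) := by
      intro j _
      rw [sub_smul]; ring
    rw [Finset.sum_congr rfl e, Finset.sum_add_distrib, S2, Finset.sum_range_succ,
      show 2 * t + 2 - 2 * t = 2 from by omega]
    abel
  rw [L, R, Finset.sum_sub_distrib]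
  abel

lemma Codd
    (hC2 : ∀ n : ℕ, 2 ≤ n → Cop ((X : ℚ[X]) ^ n) = X ^ (n + 1) - X ^ (n - 1))
    (t : ℕ) : Cop (QQ (2 * t + 2)) = QQ (2 * t + 3) := by
  have hq2 : QQ (2 * t + 2)
      = ∑ j ∈ Finset.range (t + 1), Acoef (2 * t + 1) j • (X : ℚ[X]) ^ (2 * t + 2 - 2 * j) := by
    rw [show 2 * t + 2 = (2 * t + 1) + 1 from rfl, QQ_eq, show (2 * t + 1) / 2 = t from by omega]
  have hq3 : QQ (2 * t + 3)
      = ∑ j ∈ Finset.range (t + 2), Acoef (2 * t + 2) j • (X : ℚ[X]) ^ (2 * t + 3 - 2 * j) := by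
    rw [show 2 * t + 3 = (2 * t + 2) + 1 from rfl, QQ_eq, show (2 * t + 2) / 2 = t + 1 from by omega]
  have L : Cop (QQ (2 * t + 2)) = ∑ j ∈ Finset.range (t + 1),
      (Acoef (2 * t + 1) j • (X : ℚ[X]) ^ (2 * t + 3 - 2 * j)
        - Acoef (2 * t + 1) j • (X : ℚ[X]) ^ (2 * t + 1 - 2 * j)) := by
    rw [hq2, map_sum]
    apply Finset.sum_congr rfl
    intro j hj
    rw [Finset.mem_range] at hj
    rw [map_smul, hC2 _ (by omega), smul_sub,
      show 2 * t + 2 - 2 * j + 1 = 2 * t + 3 - 2 * j from by omega,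
      show 2 * t + 2 - 2 * j - 1 = 2 * t + 1 - 2 * j from by omega]
  have S2 : ∑ j ∈ Finset.range (t + 2),
        (Acoef (2 * t + 2) j - Acoef (2 * t + 1) j) • (X : ℚ[X]) ^ (2 * t + 3 - 2 * j)
      = - ∑ j ∈ Finset.range (t + 1), Acoef (2 * t + 1) j • (X : ℚ[X]) ^ (2 * t + 1 - 2 * j) := by
    rw [Finset.sum_range_succ']
    have h0 : (Acoef (2 * t + 2) 0 - Acoef (2 * t + 1) 0) • (X : ℚ[X]) ^ (2 * t + 3 - 2 * 0) = 0 := by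
      rw [Acoef_zero, Acoef_zero, sub_self, zero_smul]
    rw [h0, add_zero]
    have e2 : ∀ j ∈ Finset.range (t + 1),
        (Acoef (2 * t + 2) (j + 1) - Acoef (2 * t + 1) (j + 1)) • (X : ℚ[X]) ^ (2 * t + 3 - 2 * (j + 1))
          = -(Acoef (2 * t + 1) j • (X : ℚ[X]) ^ (2 * t + 1 - 2 * j)) := by
      intro j hj
      rw [Acoef_succ', sub_sub_cancel_left, neg_smul,
        show 2 * t + 3 - 2 * (j + 1) = 2 * t + 1 - 2 * j from by omega]
    rw [Finset.sum_congr rfl e2, Finset.sum_neg_distrib]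
  have R : QQ (2 * t + 3) =
      (∑ j ∈ Finset.range (t + 1), Acoef (2 * t + 1) j • (X : ℚ[X]) ^ (2 * t + 3 - 2 * j))
      - ∑ j ∈ Finset.range (t + 1), Acoef (2 * t + 1) j • (X : ℚ[X]) ^ (2 * t + 1 - 2 * j) := by
    rw [hq3]
    have e : ∀ j ∈ Finset.range (t + 2),
        Acoef (2 * t + 2) j • (X : ℚ[X]) ^ (2 * t + 3 - 2 * j)
          = Acoef (2 * t + 1) j • (X : ℚ[X]) ^ (2 * t + 3 - 2 * j)
            + (Acoef (2 * t + 2) j - Acoef (2 * t + 1) j) • (X : ℚ[X]) ^ (2 * t + 3 - 2 * j) := by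
      intro j _
      rw [sub_smul]; ring
    have S1 : ∑ j ∈ Finset.range (t + 2), Acoef (2 * t + 1) j • (X : ℚ[X]) ^ (2 * t + 3 - 2 * j)
        = ∑ j ∈ Finset.range (t + 1), Acoef (2 * t + 1) j • (X : ℚ[X]) ^ (2 * t + 3 - 2 * j) := by
      rw [Finset.sum_range_succ, Acoef_half, zero_smul, add_zero]
    rw [Finset.sum_congr rfl e, Finset.sum_add_distrib, S1, S2]
    abel
  rw [L, R, Finset.sum_sub_distrib]

lemma Dodd (hD : ∀ n : ℕ, n ≠ 0 → n ≠ 2 → Dop ((X : ℚ[X]) ^ n) = 0) (t : ℕ) :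
    Dop (QQ (2 * t + 1)) = 0 := by
  rw [QQ_eq, show (2 * t) / 2 = t from by omega, map_sum]
  apply Finset.sum_eq_zero
  intro j hj
  rw [Finset.mem_range] at hj
  rw [map_smul, hD _ (by omega) (by omega), smul_zero]

lemma Deven (hD2 : Dop ((X : ℚ[X]) ^ 2) = -1)
    (hD : ∀ n : ℕ, n ≠ 0 → n ≠ 2 → Dop ((X : ℚ[X]) ^ n) = 0) (t : ℕ) :
    Dop (QQ (2 * t + 2)) = Polynomial.C ((-1 : ℚ) ^ (t + 1) * (catalan (t + 1) : ℚ)) := by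
  rw [show 2 * t + 2 = (2 * t + 1) + 1 from rfl, QQ_eq, show (2 * t + 1) / 2 = t from by omega,
    map_sum, Finset.sum_range_succ]
  have h1 : ∑ j ∈ Finset.range t, Dop (Acoef (2 * t + 1) j • (X : ℚ[X]) ^ (2 * t + 1 + 1 - 2 * j)) = 0 := by
    apply Finset.sum_eq_zero
    intro j hj
    rw [Finset.mem_range] at hj
    rw [map_smul, hD _ (by omega) (by omega), smul_zero]
  rw [h1, zero_add, show 2 * t + 1 + 1 - 2 * t = 2 from by omega, map_smul, hD2, Acoef_cat,
    show (-1 : ℚ[X]) = Polynomial.C (-1) from by simp, Polynomial.smul_C]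
  congr 1
  rw [smul_eq_mul, pow_succ]
  ring

end aux

/-- If `𝒞, 𝒟` are the linear operators of Definition 5.1, then `𝒞(𝒬_n) = 𝒬_{n+1}`,
`𝒟(𝒬_n) = 0` for odd `n`, and `𝒟(𝒬_n) = (-1)^{n/2} C_{n/2}` for even `n`, where
`C_k` is the `k`-th Catalan number. -/
theorem stmt9 (Cop Dop : Polynomial ℚ →ₗ[ℚ] Polynomial ℚ)
    (hC2 : ∀ n : ℕ, 2 ≤ n →
      Cop (Polynomial.X ^ n) = Polynomial.X ^ (n + 1) - Polynomial.X ^ (n - 1))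
    (hC0 : Cop (Polynomial.X ^ 0) = Polynomial.X ^ 1)
    (hC1 : Cop (Polynomial.X ^ 1) = Polynomial.X ^ 2)
    (hD2 : Dop (Polynomial.X ^ 2) = -1)
    (hD0 : Dop (Polynomial.X ^ 0) = 1)
    (hD : ∀ n : ℕ, n ≠ 0 → n ≠ 2 → Dop (Polynomial.X ^ n) = 0) :
    ∀ n : ℕ,
      Cop (QQ n) = QQ (n + 1) ∧
        (Odd n → Dop (QQ n) = 0) ∧
        (Even n →
          Dop (QQ n) = Polynomial.C ((-1 : ℚ) ^ (n / 2) * (catalan (n / 2) : ℚ))) := by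
  intro n
  refine ⟨?_, ?_, ?_⟩
  · rcases n with _ | m
    · have h0 : QQ 0 = (X : ℚ[X]) ^ 0 := by rw [pow_zero]; rw [QQ]
      rw [h0, hC0, QQ_eq 0]
      simp [Acoef_zero]
    · rcases Nat.even_or_odd m with he | ho
      · obtain ⟨t, ht⟩ := he
        have hm : m = 2 * t := by omega
        subst hm
        exact Ceven Cop hC1 hC2 t
      · obtain ⟨t, ht⟩ := ho
        subst ht
        exact Codd Cop hC2 t
  · intro hodd
    obtain ⟨t, ht⟩ := hodd
    subst ht
    exact Dodd Dop hD t
  · intro heven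
    obtain ⟨k, hk⟩ := heven
    rcases k with _ | s
    · have hn : n = 0 := by omega
      subst hn
      have h0 : QQ 0 = (X : ℚ[X]) ^ 0 := by rw [pow_zero]; rw [QQ]
      rw [h0, hD0]
      norm_num
    · have hn : n = 2 * s + 2 := by omega
      subst hn
      rw [show (2 * s + 2) / 2 = s + 1 from by omega]
      exact Deven Dop hD2 hD s
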